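/- Let K be an algebraically closed field of characteristic zero equipped with a nonarchimedean multiplicative absolute value v, let d ≥ 2 be an integer, c ∈ K with v(c) > 1, and φ(z) = z^d + c. Set m = 2 if d = 2 and m = 1 otherwise. Let α ∈ K and let L be a real number such that max(log v(φ^[k](α)), 0)/d^k tends to L as k → ∞. Then for every finite set X of natural numbers there is a subset Y ⊆ X with (d^m + 1)·|Y| ≥ |X| − m such that for all i, j ∈ Y with j > i and φ^[j](α) ≠ φ^[i](α), one has (1/d)·log v(c) + log v(φ^[j](α) − φ^[i](α)) ≤ d^{j+1}·L − log v(d·1_K) − log v(2·1_K). -/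

import Mathlib

open Filter Polynomial

theorem multiset_prod_nonneg' {α : Type*} {s : Multiset α} {f : α → ℝ}
    (h : ∀ x ∈ s, 0 ≤ f x) : 0 ≤ (s.map f).prod := by
  induction s using Multiset.induction with
  | empty => simp
  | cons a t ih =>
    simp only [Multiset.map_cons, Multiset.prod_cons]
    exact mul_nonneg (h a (Multiset.mem_cons_self a t))
      (ih fun x hx => h x (Multiset.mem_cons_of_mem hx))

theorem multiset_prod_le_prod' {α : Type*} {s : Multiset α} {f g : α → ℝ}
    (h0 : ∀ x ∈ s, 0 ≤ f x) (h : ∀ x ∈ s, f x ≤ g x) :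
    (s.map f).prod ≤ (s.map g).prod := by
  induction s using Multiset.induction with
  | empty => simp
  | cons a t ih =>
    simp only [Multiset.map_cons, Multiset.prod_cons]
    have hf0 : ∀ x ∈ t, 0 ≤ f x := fun x hx => h0 x (Multiset.mem_cons_of_mem hx)
    have ha0 := h0 a (Multiset.mem_cons_self a t)
    exact mul_le_mul (h a (Multiset.mem_cons_self a t))
      (ih hf0 fun x hx => h x (Multiset.mem_cons_of_mem hx))
      (multiset_prod_nonneg' hf0) (ha0.trans (h a (Multiset.mem_cons_self a t)))

section Aux
variable {K : Type*} [Field K] (v : AbsoluteValue K ℝ)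

theorem v_nat_le_one (hna : ∀ x y : K, v (x + y) ≤ max (v x) (v y)) (n : ℕ) :
    v (n : K) ≤ 1 := by
  induction n with
  | zero => simp
  | succ k ih =>
    push_cast
    calc v ((k : K) + 1) ≤ max (v (k : K)) (v 1) := hna _ _
    _ ≤ 1 := by simp [ih]

theorem v_add_eq (hna : ∀ x y : K, v (x + y) ≤ max (v x) (v y)) {x y : K}
    (h : v y < v x) : v (x + y) = v x := by
  refine le_antisymm ((hna x y).trans (by simp [le_of_lt h])) (not_lt.1 fun hlt => ?_)
  have hle : v x ≤ max (v (x + y)) (v y) := by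
    calc v x = v ((x + y) + (-y)) := by congr 1; ring
    _ ≤ max (v (x + y)) (v (-y)) := hna _ _
    _ = max (v (x + y)) (v y) := by rw [v.map_neg]
  exact absurd hle (not_le.2 (max_lt hlt h))

end Aux

theorem cover_of_poly {K : Type*} [Field K] [IsAlgClosed K] [DecidableEq K]
    (v : AbsoluteValue K ℝ)
    (hna : ∀ x y : K, v (x + y) ≤ max (v x) (v y))
    (P : K[X]) (hP : P.Monic) (hdeg : 0 < P.natDegree) {V : ℝ} (hV : 0 < V)
    (hders : ∀ γ ∈ P.roots, V ≤ v ((Polynomial.derivative P).eval γ)) (z : K) :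
    ∃ γ ∈ P.roots.toFinset, v (z - γ) ≤ v (P.eval z) / V := by
  have hsplits := IsAlgClosed.splits P
  have hcard : Multiset.card P.roots = P.natDegree := splits_iff_card_roots.1 hsplits
  have hne : P.roots.toFinset.Nonempty := by
    rw [Multiset.toFinset_nonempty]
    intro h0
    rw [h0] at hcard
    simp at hcard
    omega
  obtain ⟨γ₀, hγ₀mem, hγ₀min⟩ :=
    P.roots.toFinset.exists_min_image (fun γ => v (z - γ)) hne
  have hγ₀roots : γ₀ ∈ P.roots := Multiset.mem_toFinset.1 hγ₀mem
  refine ⟨γ₀, hγ₀mem, ?_⟩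
  -- P as product of roots
  have hprod := hsplits.eq_prod_roots_of_monic hP
  set Q : K[X] := ((P.roots.erase γ₀).map (fun a => X - C a)).prod with hQ
  have hPQ : P = (X - C γ₀) * Q := by
    calc P = (Multiset.map (fun a => X - C a) (γ₀ ::ₘ P.roots.erase γ₀)).prod := by
          rw [Multiset.cons_erase hγ₀roots, ← hprod]
    _ = (X - C γ₀) * Q := by rw [Multiset.map_cons, Multiset.prod_cons]
  -- derivative at γ₀ equals Q.eval γ₀
  have hder : (Polynomial.derivative P).eval γ₀ = Q.eval γ₀ := by
    rw [hPQ, Polynomial.derivative_mul]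
    simp
  have hevalQ : ∀ w : K, v (Q.eval w) = ((P.roots.erase γ₀).map (fun a => v (w - a))).prod := by
    intro w
    rw [hQ, Polynomial.eval_multiset_prod, map_multiset_prod, Multiset.map_map, Multiset.map_map]
    congr 1
    apply Multiset.map_congr rfl
    intro a _
    simp
  have hevalP : v (P.eval z)
      = v (z - γ₀) * ((P.roots.erase γ₀).map (fun a => v (z - a))).prod := by
    rw [← hevalQ z, hPQ]
    simp [map_mul]
  have hpoint : ∀ a ∈ P.roots.erase γ₀, v (γ₀ - a) ≤ v (z - a) := by
    intro a ha
    have haroots : a ∈ P.roots := Multiset.mem_of_mem_erase ha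
    have hmin := hγ₀min a (Multiset.mem_toFinset.2 haroots)
    calc v (γ₀ - a) = v ((γ₀ - z) + (z - a)) := by congr 1; ring
    _ ≤ max (v (γ₀ - z)) (v (z - a)) := hna _ _
    _ ≤ max (v (z - γ₀)) (v (z - a)) := by rw [v.map_sub]
    _ ≤ v (z - a) := max_le hmin le_rfl
  have hVle : V ≤ ((P.roots.erase γ₀).map (fun a => v (z - a))).prod := by
    calc V ≤ v ((Polynomial.derivative P).eval γ₀) := hders γ₀ hγ₀roots
    _ = ((P.roots.erase γ₀).map (fun a => v (γ₀ - a))).prod := by rw [hder, hevalQ]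
    _ ≤ ((P.roots.erase γ₀).map (fun a => v (z - a))).prod :=
        multiset_prod_le_prod' (fun a _ => v.nonneg _) hpoint
  rw [le_div_iff₀ hV, hevalP]
  exact mul_le_mul_of_nonneg_left hVle (v.nonneg _)

theorem pow_inj_nonneg {a b : ℝ} (ha : 0 ≤ a) (hb : 0 ≤ b) {n : ℕ} (hn : n ≠ 0)
    (h : a ^ n = b ^ n) : a = b := by
  rw [← Real.pow_rpow_inv_natCast ha hn, h, Real.pow_rpow_inv_natCast hb hn]

theorem key_cover {K : Type*} [Field K] [IsAlgClosed K] [CharZero K] [DecidableEq K]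
    (v : AbsoluteValue K ℝ) (hna : ∀ x y : K, v (x + y) ≤ max (v x) (v y))
    (d : ℕ) (hd : 2 ≤ d) (c : K) (hc : 1 < v c)
    (m : ℕ) (hm : m = if d = 2 then 2 else 1) :
    ∃ G : Finset K, G.card ≤ d ^ m ∧ ∀ z : K,
      v ((fun z : K => z ^ d + c)^[m] z) ≤ v c ^ ((d : ℝ)⁻¹) →
      ∃ γ ∈ G, v (z - γ) ≤ (v c ^ ((d : ℝ)⁻¹) * v 2 * v (d : K))⁻¹ := by
  have hd0 : d ≠ 0 := by omega
  set R : ℝ := v c ^ ((d : ℝ)⁻¹) with hR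
  have hvc0 : (0 : ℝ) < v c := lt_trans one_pos hc
  have hR1 : 1 < R := by
    rw [hR, Real.one_lt_rpow_iff_of_pos hvc0]
    left
    constructor
    · exact hc
    · positivity
  have hR0 : (0 : ℝ) < R := lt_trans one_pos hR1
  have hRd : R ^ d = v c := Real.rpow_inv_natCast_pow (le_of_lt hvc0) hd0
  have h2K : (2 : K) ≠ 0 := two_ne_zero
  have hv2 : (0 : ℝ) < v 2 := v.pos h2K
  have hv2le : v (2 : K) ≤ 1 := by
    have := v_nat_le_one v hna 2
    simpa using this
  have hvd : (0 : ℝ) < v (d : K) := v.pos (by exact_mod_cast hd0)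
  have hvdle : v ((d : ℕ) : K) ≤ 1 := v_nat_le_one v hna d
  by_cases hd2 : d = 2
  · -- d = 2, m = 2
    subst hd2
    have hm2 : m = 2 := by simpa using hm
    subst hm2
    set q : K[X] := X ^ 2 + C c with hq
    have hqmon : q.Monic := monic_X_pow_add_C c two_ne_zero
    set P : K[X] := q ^ 2 + C c with hPdef
    have hq2deg : (q ^ 2).natDegree = 4 := by
      rw [Polynomial.natDegree_pow, hq, Polynomial.natDegree_X_pow_add_C]
    have hq2degpos : 0 < (q ^ 2).degree := by
      rw [Polynomial.natDegree_pos_iff_degree_pos.symm, hq2deg]; norm_num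
    have hPmon : P.Monic := (hqmon.pow 2).add_of_left (Polynomial.degree_C_le.trans_lt hq2degpos)
    have hPdeg : P.natDegree = 4 := by
      rw [hPdef, Polynomial.natDegree_add_C, hq2deg]
    have hroot : ∀ γ ∈ P.roots, v (γ ^ 2 + c) = R ∧ v γ = R := by
      intro γ hγ
      have hz : (γ ^ 2 + c) ^ 2 + c = 0 := by
        have := (Polynomial.mem_roots hPmon.ne_zero).1 hγ
        simpa [Polynomial.IsRoot, hPdef, hq] using this
      have hsq : (γ ^ 2 + c) ^ 2 = -c := by linear_combination hz
      have h1 : v (γ ^ 2 + c) ^ 2 = R ^ 2 := by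
        rw [← map_pow, hsq, v.map_neg, ← hRd]
      have hv1 : v (γ ^ 2 + c) = R := pow_inj_nonneg (v.nonneg _) (le_of_lt hR0) two_ne_zero h1
      refine ⟨hv1, ?_⟩
      have hlt : v (γ ^ 2 + c) < v (-c) := by
        rw [v.map_neg, ← hRd, hv1]
        calc R = R * 1 := (mul_one R).symm
        _ < R * R := by nlinarith
        _ = R ^ 2 := by ring
      have hγ2 : v (γ ^ 2) = v c := by
        have := v_add_eq v hna hlt
        rw [v.map_neg] at this
        calc v (γ ^ 2) = v (-c + (γ ^ 2 + c)) := by congr 1; ring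
        _ = v c := this
      rw [map_pow, ← hRd] at hγ2
      exact pow_inj_nonneg (v.nonneg _) (le_of_lt hR0) two_ne_zero hγ2
    have hders : ∀ γ ∈ P.roots, v 2 * v 2 * (R * R) ≤ v ((Polynomial.derivative P).eval γ) := by
      intro γ hγ
      obtain ⟨h1, h2⟩ := hroot γ hγ
      have hderP : Polynomial.derivative P = C 2 * q ^ 1 * (C 2 * X ^ 1) := by
        rw [hPdef, Polynomial.derivative_add, Polynomial.derivative_C, add_zero,
          Polynomial.derivative_pow, hq, Polynomial.derivative_add, Polynomial.derivative_C,
          add_zero, Polynomial.derivative_X_pow]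
        norm_num
      rw [hderP]
      simp only [Polynomial.eval_mul, Polynomial.eval_C, Polynomial.eval_pow,
        Polynomial.eval_X, pow_one, map_mul, hq, Polynomial.eval_add, Polynomial.eval_C]
      rw [h1, h2]
      exact le_of_eq (by ring)
    have hVpos : (0 : ℝ) < v 2 * v 2 * (R * R) := mul_pos (mul_pos hv2 hv2) (mul_pos hR0 hR0)
    refine ⟨P.roots.toFinset, ?_, ?_⟩
    · calc P.roots.toFinset.card ≤ Multiset.card P.roots := Multiset.toFinset_card_le _
      _ ≤ P.natDegree := Polynomial.card_roots' P
      _ = 2 ^ 2 := by rw [hPdeg]; norm_num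
    · intro z hz
      obtain ⟨γ, hγ, hle⟩ := cover_of_poly v hna P hPmon (by rw [hPdeg]; norm_num) hVpos hders z
      refine ⟨γ, hγ, ?_⟩
      have hPz : P.eval z = (fun z : K => z ^ 2 + c)^[2] z := by
        simp [hPdef, hq, Function.iterate_succ_apply']
      have hPzle : v (P.eval z) ≤ R := by rw [hPz]; exact_mod_cast hz
      calc v (z - γ) ≤ v (P.eval z) / (v 2 * v 2 * (R * R)) := hle
      _ ≤ R / (v 2 * v 2 * (R * R)) := by gcongr
      _ = (R * v 2 * v ((2 : ℕ) : K))⁻¹ := by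
          have : v ((2 : ℕ) : K) = v 2 := by norm_num
          rw [this]
          field_simp
  · -- d ≠ 2, m = 1
    have hm1 : m = 1 := by simp [hm, hd2]
    subst hm1
    have hd3 : 3 ≤ d := by omega
    set P : K[X] := X ^ d + C c with hPdef
    have hPmon : P.Monic := monic_X_pow_add_C c hd0
    have hPdeg : P.natDegree = d := Polynomial.natDegree_X_pow_add_C
    have hroot : ∀ γ ∈ P.roots, v γ = R := by
      intro γ hγ
      have hz : γ ^ d + c = 0 := by
        have := (Polynomial.mem_roots hPmon.ne_zero).1 hγ
        simpa [Polynomial.IsRoot, hPdef] using this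
      have hsq : γ ^ d = -c := by linear_combination hz
      have h1 : v γ ^ d = R ^ d := by rw [← map_pow, hsq, v.map_neg, ← hRd]
      exact pow_inj_nonneg (v.nonneg _) (le_of_lt hR0) hd0 h1
    have hders : ∀ γ ∈ P.roots,
        v ((d : ℕ) : K) * R ^ (d - 1) ≤ v ((Polynomial.derivative P).eval γ) := by
      intro γ hγ
      have hderP : Polynomial.derivative P = C ((d : ℕ) : K) * X ^ (d - 1) := by
        rw [hPdef, Polynomial.derivative_add, Polynomial.derivative_C, add_zero,
          Polynomial.derivative_X_pow]
      rw [hderP]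
      simp only [Polynomial.eval_mul, Polynomial.eval_C, Polynomial.eval_pow, Polynomial.eval_X,
        map_mul, map_pow]
      rw [hroot γ hγ]
    have hVpos : (0 : ℝ) < v ((d : ℕ) : K) * R ^ (d - 1) := mul_pos hvd (pow_pos hR0 _)
    refine ⟨P.roots.toFinset, ?_, ?_⟩
    · calc P.roots.toFinset.card ≤ Multiset.card P.roots := Multiset.toFinset_card_le _
      _ ≤ P.natDegree := Polynomial.card_roots' P
      _ = d ^ 1 := by rw [hPdeg, pow_one]
    · intro z hz
      obtain ⟨γ, hγ, hle⟩ := cover_of_poly v hna P hPmon (by rw [hPdeg]; omega) hVpos hders z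
      refine ⟨γ, hγ, ?_⟩
      have hPz : P.eval z = (fun z : K => z ^ d + c)^[1] z := by
        simp [hPdef]
      have hPzle : v (P.eval z) ≤ R := by rw [hPz]; exact_mod_cast hz
      have hpow : R ^ 2 ≤ R ^ (d - 1) := pow_le_pow_right₀ (le_of_lt hR1) (by omega)
      calc v (z - γ) ≤ v (P.eval z) / (v ((d : ℕ) : K) * R ^ (d - 1)) := hle
      _ ≤ R / (v ((d : ℕ) : K) * R ^ (d - 1)) := by gcongr
      _ ≤ (R * v 2 * v ((d : ℕ) : K))⁻¹ := by
          rw [inv_eq_one_div, div_le_div_iff₀ hVpos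
            (mul_pos (mul_pos hR0 hv2) hvd)]
          have hRR : R * R * v 2 ≤ R ^ (d - 1) := by
            calc R * R * v 2 ≤ R * R * 1 := by nlinarith [hv2le, hR0]
            _ = R ^ 2 := by ring
            _ ≤ R ^ (d - 1) := hpow
          nlinarith [hRR, hvd]

theorem nonarch_pigeonhole {K : Type*} [Field K] [IsAlgClosed K] [CharZero K]
    (v : AbsoluteValue K ℝ)
    (hna : ∀ x y : K, v (x + y) ≤ max (v x) (v y))
    (d : ℕ) (hd : 2 ≤ d) (c : K) (hc : v c > 1)
    (m : ℕ) (hm : m = if d = 2 then 2 else 1)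
    (α : K) (L : ℝ)
    (hL : Tendsto (fun k : ℕ =>
        max (Real.log (v ((fun z : K => z ^ d + c)^[k] α))) 0 / (d : ℝ) ^ k)
      atTop (nhds L)) :
    ∀ X : Finset ℕ, ∃ Y : Finset ℕ, Y ⊆ X ∧
      ((d ^ m + 1 : ℤ)) * Y.card ≥ (X.card : ℤ) - m ∧
      ∀ i ∈ Y, ∀ j ∈ Y, i < j →
        (fun z : K => z ^ d + c)^[j] α ≠ (fun z : K => z ^ d + c)^[i] α →
        (1 / d) * Real.log (v c) +
            Real.log (v ((fun z : K => z ^ d + c)^[j] α -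
              (fun z : K => z ^ d + c)^[i] α)) ≤
          (d : ℝ) ^ (j + 1) * L - Real.log (v (d : K)) - Real.log (v (2 : K)) := by
  classical
  intro X
  have hd0 : d ≠ 0 := by omega
  set φ : K → K := fun z : K => z ^ d + c with hφ
  set R : ℝ := v c ^ ((d : ℝ)⁻¹) with hR
  have hvc0 : (0 : ℝ) < v c := lt_trans one_pos hc
  have hR1 : 1 < R := by
    rw [hR, Real.one_lt_rpow_iff_of_pos hvc0]
    exact Or.inl ⟨hc, by positivity⟩
  have hR0 : (0 : ℝ) < R := lt_trans one_pos hR1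
  have hRd : R ^ d = v c := Real.rpow_inv_natCast_pow (le_of_lt hvc0) hd0
  have hv2 : (0 : ℝ) < v 2 := v.pos two_ne_zero
  have hv2le : v (2 : K) ≤ 1 := by simpa using v_nat_le_one v hna 2
  have hvd : (0 : ℝ) < v ((d : ℕ) : K) := v.pos (by exact_mod_cast hd0)
  have hvdle : v ((d : ℕ) : K) ≤ 1 := v_nat_le_one v hna d
  set z : ℕ → K := fun k => φ^[k] α with hzdef
  have hstep : ∀ k, z (k + 1) = (z k) ^ d + c := by
    intro k
    show φ^[k + 1] α = (φ^[k] α) ^ d + c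
    rw [Function.iterate_succ_apply']
  have hL' : Tendsto (fun k : ℕ => max (Real.log (v (z k))) 0 / (d : ℝ) ^ k)
      atTop (nhds L) := hL
  have hL0 : 0 ≤ L := by
    refine ge_of_tendsto' hL' fun k => ?_
    have h1 : (0 : ℝ) ≤ max (Real.log (v (z k))) 0 := le_max_right _ _
    positivity
  -- escaping orbit facts
  have hBigStep : ∀ k, R < v (z k) → v (z (k + 1)) = v (z k) ^ d ∧ R < v (z (k + 1)) := by
    intro k hk
    have h1 : v c < v (z k) ^ d := by
      rw [← hRd]
      exact pow_lt_pow_left₀ hk (le_of_lt hR0) hd0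
    have h2 : v (z (k + 1)) = v (z k) ^ d := by
      calc v (z (k + 1)) = v ((z k) ^ d + c) := by rw [hstep k]
      _ = v ((z k) ^ d) := v_add_eq v hna (by rw [map_pow]; exact h1)
      _ = v (z k) ^ d := map_pow v _ d
    refine ⟨h2, ?_⟩
    rw [h2]
    calc R ≤ R ^ d := le_self_pow₀ (le_of_lt hR1) hd0
    _ < v (z k) ^ d := pow_lt_pow_left₀ hk (le_of_lt hR0) hd0
  have hBigMono : ∀ k l, k ≤ l → R < v (z k) → R < v (z l) ∧ v (z k) ≤ v (z l) := by
    intro k l hkl hk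
    induction l, hkl using Nat.le_induction with
    | base => exact ⟨hk, le_rfl⟩
    | succ n hn ih =>
      obtain ⟨hbn, hvn⟩ := ih
      obtain ⟨heq, hb⟩ := hBigStep n hbn
      refine ⟨hb, hvn.trans ?_⟩
      rw [heq]
      exact le_self_pow₀ (le_of_lt (lt_trans hR1 hbn)) hd0
  have hBigL : ∀ j, R < v (z j) → Real.log (v (z j)) = (d : ℝ) ^ j * L := by
    intro j hj
    have hdR : (0 : ℝ) < (d : ℝ) := by positivity
    have hlogpos : 0 < Real.log (v (z j)) := Real.log_pos (lt_trans hR1 hj)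
    have key : ∀ n, max (Real.log (v (z (j + n)))) 0 / (d : ℝ) ^ (j + n)
        = Real.log (v (z j)) / (d : ℝ) ^ j := by
      intro n
      induction n with
      | zero => simp [max_eq_left (le_of_lt hlogpos)]
      | succ t ih =>
        have hbig : R < v (z (j + t)) := (hBigMono j (j + t) (by omega) hj).1
        have h1 : v (z (j + t + 1)) = v (z (j + t)) ^ d := (hBigStep _ hbig).1
        have hApos : 0 < Real.log (v (z (j + t))) := Real.log_pos (lt_trans hR1 hbig)
        have hlog : Real.log (v (z (j + t + 1))) = d * Real.log (v (z (j + t))) := by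
          rw [h1, Real.log_pow]
        have hstep2 : (j + (t + 1)) = (j + t) + 1 := by omega
        rw [hstep2, hlog, ← ih, max_eq_left (le_of_lt hApos),
          max_eq_left (by positivity)]
        rw [pow_succ]
        field_simp
    have htc : Tendsto (fun k : ℕ => max (Real.log (v (z k))) 0 / (d : ℝ) ^ k) atTop
        (nhds (Real.log (v (z j)) / (d : ℝ) ^ j)) := by
      refine Tendsto.congr' ?_ tendsto_const_nhds
      filter_upwards [eventually_ge_atTop j] with n hn
      obtain ⟨t, rfl⟩ : ∃ t, n = j + t := ⟨n - j, by omega⟩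
      exact (key t).symm
    have hLeq := tendsto_nhds_unique hL' htc
    rw [hLeq, mul_div_cancel₀]
    positivity
  -- covering by roots
  obtain ⟨G, hGcard, hGcover⟩ := key_cover v hna d hd c hc m hm
  set s : ℝ := (R * v 2 * v ((d : ℕ) : K))⁻¹ with hs
  have hzm : ∀ k, φ^[m] (z k) = z (k + m) := by
    intro k
    show φ^[m] (φ^[k] α) = φ^[k + m] α
    rw [add_comm, Function.iterate_add_apply]
  have hf : ∀ k : ℕ, ¬ R < v (z (k + m)) → ∃ γ ∈ G, v (z k - γ) ≤ s := by
    intro k hk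
    refine hGcover (z k) ?_
    rw [hzm k]
    exact not_lt.1 hk
  set f : ℕ → Option K := fun k =>
    if h : R < v (z (k + m)) then none else some (Classical.choose (hf k h)) with hfdef
  have hfnone : ∀ k, f k = none → R < v (z (k + m)) := by
    intro k hk
    simp only [hfdef] at hk
    split at hk
    · assumption
    · simp at hk
  have hfsome : ∀ k γ, f k = some γ →
      γ ∈ G ∧ ¬ R < v (z (k + m)) ∧ v (z k - γ) ≤ s := by
    intro k γ hk
    simp only [hfdef] at hk
    split at hk
    · simp at hk
    · next h =>
      obtain ⟨hγG, hdist⟩ := Classical.choose_spec (hf k h)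
      injection hk with hk'
      subst hk'
      exact ⟨hγG, h, hdist⟩
  set X₀ : Finset ℕ := X.filter (fun k => R < v (z k) ∨ ¬ R < v (z (k + m))) with hX₀
  have hX₀sub : X₀ ⊆ X := Finset.filter_subset _ _
  have hsdcard : (X \ X₀).card ≤ m := by
    have hBs : ∀ k ∈ X \ X₀, ¬ R < v (z k) ∧ R < v (z (k + m)) := by
      intro k hk
      rw [Finset.mem_sdiff, hX₀, Finset.mem_filter] at hk
      push_neg at hk
      exact ⟨not_lt.2 (hk.2 hk.1).1, (hk.2 hk.1).2⟩
    by_cases hBe : (X \ X₀).Nonempty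
    · set b0 := (X \ X₀).min' hBe with hb0def
      have hb0 := hBs b0 (Finset.min'_mem _ hBe)
      have hsub2 : X \ X₀ ⊆ Finset.Ico b0 (b0 + m) := by
        intro k hk
        obtain ⟨hk1, hk2⟩ := hBs k hk
        refine Finset.mem_Ico.2 ⟨Finset.min'_le _ k hk, ?_⟩
        by_contra hge
        push_neg at hge
        exact hk1 ((hBigMono (b0 + m) k hge hb0.2).1)
      have hcc := Finset.card_le_card hsub2
      rw [Nat.card_Ico] at hcc
      omega
    · rw [Finset.not_nonempty_iff_eq_empty] at hBe
      rw [hBe]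
      simp
  have hXcard : X.card ≤ X₀.card + m := by
    have := Finset.card_sdiff_add_card_eq_card hX₀sub
    omega
  set T : Finset (Option K) := insert none (G.image some) with hT
  have hTcard : T.card ≤ d ^ m + 1 := by
    calc T.card ≤ (G.image some).card + 1 := Finset.card_insert_le _ _
    _ ≤ G.card + 1 := by
        have := Finset.card_image_le (s := G) (f := some)
        omega
    _ ≤ d ^ m + 1 := by omega
  have hmaps : ∀ k ∈ X₀, f k ∈ T := by
    intro k _
    simp only [hfdef]
    split
    · exact Finset.mem_insert_self _ _
    · next h =>
      exact Finset.mem_insert_of_mem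
        (Finset.mem_image_of_mem some (Classical.choose_spec (hf k h)).1)
  have hTne : T.Nonempty := ⟨none, Finset.mem_insert_self _ _⟩
  obtain ⟨b, hbT, hbmax⟩ :=
    T.exists_max_image (fun b => (X₀.filter (fun k => f k = b)).card) hTne
  set Y : Finset ℕ := X₀.filter (fun k => f k = b) with hYdef
  have hYsub : Y ⊆ X := (Finset.filter_subset _ _).trans hX₀sub
  have hcount : X₀.card ≤ T.card * Y.card := by
    rw [Finset.card_eq_sum_card_fiberwise hmaps]
    calc ∑ b' ∈ T, (X₀.filter (fun k => f k = b')).card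
        ≤ ∑ _b' ∈ T, Y.card := Finset.sum_le_sum (fun b' hb' => hbmax b' hb')
    _ = T.card * Y.card := by rw [Finset.sum_const, smul_eq_mul]
  refine ⟨Y, hYsub, ?_, ?_⟩
  · have h1 : X.card ≤ (d ^ m + 1) * Y.card + m := by
      have h2 : T.card * Y.card ≤ (d ^ m + 1) * Y.card := Nat.mul_le_mul_right _ hTcard
      omega
    have h2 : ((X.card : ℤ)) ≤ (((d ^ m + 1) * Y.card + m : ℕ) : ℤ) := Int.ofNat_le.2 h1
    push_cast at h2
    linarith
  · intro i hi j hj hij hne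
    have hiY := Finset.mem_filter.1 hi
    have hjY := Finset.mem_filter.1 hj
    have hiX₀ : R < v (z i) ∨ ¬ R < v (z (i + m)) := by
      have := Finset.mem_filter.1 (Finset.mem_filter.1 hi).1
      exact this.2
    have hjX₀ : R < v (z j) ∨ ¬ R < v (z (j + m)) := by
      have := Finset.mem_filter.1 (Finset.mem_filter.1 hj).1
      exact this.2
    have hδne : z j - z i ≠ 0 := sub_ne_zero.2 hne
    have hδpos : 0 < v (z j - z i) := v.pos hδne
    have hlogR : Real.log R = (1 / (d : ℝ)) * Real.log (v c) := by
      rw [hR, Real.log_rpow hvc0, one_div]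
    have hlogd0 : Real.log (v ((d : ℕ) : K)) ≤ 0 := Real.log_nonpos (v.nonneg _) hvdle
    have hlog20 : Real.log (v (2 : K)) ≤ 0 := Real.log_nonpos (v.nonneg _) hv2le
    show (1 / (d : ℝ)) * Real.log (v c) + Real.log (v (z j - z i)) ≤
        (d : ℝ) ^ (j + 1) * L - Real.log (v ((d : ℕ) : K)) - Real.log (v (2 : K))
    rw [← hlogR]
    rcases hbeq : b with _ | γ
    · -- escaped class
      rw [hbeq] at hiY hjY
      have hBi : R < v (z (i + m)) := hfnone i hiY.2
      have hBj : R < v (z (j + m)) := hfnone j hjY.2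
      have hBigi : R < v (z i) := hiX₀.resolve_right (fun h => h hBi)
      have hBigj : R < v (z j) := hjX₀.resolve_right (fun h => h hBj)
      have hvij : v (z i) ≤ v (z j) := (hBigMono i j (le_of_lt hij) hBigi).2
      have hvδ : v (z j - z i) ≤ v (z j) := by
        calc v (z j - z i) = v (z j + (- z i)) := by congr 1; ring
        _ ≤ max (v (z j)) (v (- z i)) := hna _ _
        _ = max (v (z j)) (v (z i)) := by rw [v.map_neg]
        _ = v (z j) := max_eq_left hvij
      have hlogj : Real.log (v (z j)) = (d : ℝ) ^ j * L := hBigL j hBigj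
      have hlogδ : Real.log (v (z j - z i)) ≤ Real.log (v (z j)) :=
        Real.log_le_log hδpos hvδ
      have hlogRj : Real.log R < Real.log (v (z j)) := Real.log_lt_log hR0 hBigj
      have hlogR0 : 0 < Real.log R := Real.log_pos hR1
      have hpow : (d : ℝ) ^ (j + 1) * L = (d : ℝ) * Real.log (v (z j)) := by
        rw [hlogj, pow_succ]
        ring
      rw [hpow]
      have hd2 : (2 : ℝ) ≤ (d : ℝ) := by exact_mod_cast hd
      nlinarith [hlogδ, hlogRj, hlogd0, hlog20, hlogR0,
        mul_nonneg (sub_nonneg.2 hd2) (le_of_lt (lt_trans hlogR0 hlogRj))]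
    · -- sphere class
      rw [hbeq] at hiY hjY
      obtain ⟨hγG, hnBi, hdisti⟩ := hfsome i γ hiY.2
      obtain ⟨_, hnBj, hdistj⟩ := hfsome j γ hjY.2
      have hvδ : v (z j - z i) ≤ s := by
        calc v (z j - z i) = v ((z j - γ) + (γ - z i)) := by congr 1; ring
        _ ≤ max (v (z j - γ)) (v (γ - z i)) := hna _ _
        _ ≤ s := max_le hdistj (by rw [v.map_sub]; exact hdisti)
      have hs0 : (0 : ℝ) < s := by
        rw [hs]
        positivity
      have hlogs : Real.log s
          = -(Real.log R + Real.log (v 2) + Real.log (v ((d : ℕ) : K))) := by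
        rw [hs, Real.log_inv, Real.log_mul (by positivity) (ne_of_gt hvd),
          Real.log_mul (ne_of_gt hR0) (ne_of_gt hv2)]
      have hlogδ : Real.log (v (z j - z i)) ≤ Real.log s := Real.log_le_log hδpos hvδ
      have hLd : 0 ≤ (d : ℝ) ^ (j + 1) * L := mul_nonneg (by positivity) hL0
      linarith [hlogδ, hlogs, hLd]
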